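/- Under the zero-forcing constraint, for any P×K matrix H with rank(H) ≥ M, positive definite noise covariance R_vv, and any feasible triple (F, B, W) with tr(FFᴴ) ≤ p0 and WHF = B + I with B strictly upper triangular, the arithmetic MSE tr(W R_vv Wᴴ)/M is bounded below by (M/p0)·(∏_{i=1}^M λ_i)^(−1/M), where λ1 ≥ … ≥ λ_M are the M largest eigenvalues of Hᴴ R_vv^{-1} H. -/

import Mathlib

open Matrix ComplexOrder
open scoped MatrixOrder

namespace ZFCB
open Finset
variable {m k : ℕ}

instance : DecidablePred (StrictMono : (Fin m → Fin k) → Prop) := fun g =>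
  decidable_of_iff (∀ a b : Fin m, a < b → g a < g b)
    ⟨fun h _ _ hab => h _ _ hab, fun h _ _ hab => h hab⟩

theorem det_mul_expand (A : Matrix (Fin m) (Fin k) ℂ) (B : Matrix (Fin k) (Fin m) ℂ) :
    det (A * B) = ∑ p : Fin m → Fin k, det (A.submatrix id p) * ∏ i, B (p i) i := by
  calc det (A * B) = ∑ p : Fin m → Fin k, ∑ σ : Equiv.Perm (Fin m),
        ((Equiv.Perm.sign σ : ℤ) : ℂ) * ∏ i, A (σ i) (p i) * B (p i) i := by
        simp only [det_apply', mul_apply, Finset.prod_univ_sum, Finset.mul_sum,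
          Fintype.piFinset_univ]
        rw [Finset.sum_comm]
    _ = _ := by
        refine Finset.sum_congr rfl fun p _ => ?_
        rw [det_apply', Finset.sum_mul]
        refine Finset.sum_congr rfl fun σ _ => ?_
        rw [Finset.prod_mul_distrib]
        simp [Matrix.submatrix_apply, mul_assoc]

theorem det_submatrix_eq_zero {p : Fin m → Fin k} (hp : ¬ Function.Injective p)
    (A : Matrix (Fin m) (Fin k) ℂ) : det (A.submatrix id p) = 0 := by
  rw [Function.not_injective_iff] at hp
  obtain ⟨i, j, hpij, hij⟩ := hp
  exact det_zero_of_column_eq hij (fun r => by simp [hpij])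

theorem toInj_bijective :
    Function.Bijective (fun x : {g : Fin m → Fin k // StrictMono g} × Equiv.Perm (Fin m)
      => (⟨x.1.1 ∘ x.2, x.1.2.injective.comp x.2.injective⟩ :
          {p : Fin m → Fin k // Function.Injective p})) := by
  constructor
  · rintro ⟨⟨g, hg⟩, σ⟩ ⟨⟨g', hg'⟩, σ'⟩ h
    have hfun : g ∘ σ = g' ∘ σ' := congrArg Subtype.val h
    have himg : Finset.univ.image g = Finset.univ.image g' := by
      ext x
      simp only [Finset.mem_image, Finset.mem_univ, true_and]
      constructor
      · rintro ⟨i, rfl⟩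
        refine ⟨σ' (σ⁻¹ i), ?_⟩
        have := congrFun hfun (σ⁻¹ i)
        simp only [Function.comp_apply, Equiv.Perm.inv_def, Equiv.apply_symm_apply] at this
        exact this.symm
      · rintro ⟨i, rfl⟩
        refine ⟨σ (σ'⁻¹ i), ?_⟩
        have := congrFun hfun (σ'⁻¹ i)
        simp only [Function.comp_apply, Equiv.Perm.inv_def, Equiv.apply_symm_apply] at this
        exact this
    have hcard : (Finset.univ.image g).card = m := by
      rw [Finset.card_image_of_injective _ hg.injective, Finset.card_univ, Fintype.card_fin]
    have hgg : g = g' := by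
      have h1 : g = (Finset.univ.image g).orderEmbOfFin hcard :=
        Finset.orderEmbOfFin_unique hcard (fun i => Finset.mem_image_of_mem _ (mem_univ i)) hg
      have h2 : g' = (Finset.univ.image g).orderEmbOfFin hcard :=
        Finset.orderEmbOfFin_unique hcard
          (fun i => by rw [himg]; exact Finset.mem_image_of_mem _ (mem_univ i)) hg'
      rw [h1, h2]
    subst hgg
    have hσ : σ = σ' := Equiv.ext fun i => hg.injective (congrFun hfun i)
    rw [hσ]
  · rintro ⟨p, hp⟩
    set s : Finset (Fin k) := Finset.univ.image p with hs_def
    have hs : s.card = m := by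
      rw [hs_def, Finset.card_image_of_injective _ hp, Finset.card_univ, Fintype.card_fin]
    have hmem : ∀ i, p i ∈ s := fun i => Finset.mem_image_of_mem _ (mem_univ i)
    set σf : Fin m → Fin m := fun i => (s.orderIsoOfFin hs).symm ⟨p i, hmem i⟩ with hσf
    have hσinj : Function.Injective σf := by
      intro a b hab
      apply hp
      have h2 : ((s.orderIsoOfFin hs) (σf a) : Fin k) = ((s.orderIsoOfFin hs) (σf b) : Fin k) := by
        rw [hab]
      rw [hσf] at h2
      simpa only [OrderIso.apply_symm_apply] using h2
    have hσbij := Finite.injective_iff_bijective.mp hσinj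
    refine ⟨⟨⟨s.orderEmbOfFin hs, (s.orderEmbOfFin hs).strictMono⟩, Equiv.ofBijective σf hσbij⟩, ?_⟩
    apply Subtype.ext
    funext i
    show s.orderEmbOfFin hs (σf i) = p i
    rw [hσf]
    rw [← Finset.coe_orderIsoOfFin_apply]
    simp

theorem cauchyBinet (A : Matrix (Fin m) (Fin k) ℂ) (B : Matrix (Fin k) (Fin m) ℂ) :
    det (A * B) = ∑ g : {g : Fin m → Fin k // StrictMono g},
      det (A.submatrix id g.1) * det (B.submatrix g.1 id) := by
  rw [det_mul_expand]
  have step1 : ∑ p : Fin m → Fin k, det (A.submatrix id p) * ∏ i, B (p i) i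
      = ∑ p ∈ Finset.univ.filter (fun p : Fin m → Fin k => Function.Injective p),
        det (A.submatrix id p) * ∏ i, B (p i) i := by
    symm
    apply Finset.sum_subset (Finset.filter_subset _ _)
    intro p _ hp
    simp only [Finset.mem_filter, Finset.mem_univ, true_and] at hp
    rw [det_submatrix_eq_zero hp, zero_mul]
  rw [step1]
  rw [Finset.sum_subtype (p := fun p : Fin m → Fin k => Function.Injective p)
    (Finset.univ.filter fun p : Fin m → Fin k => Function.Injective p)
    (by simp) (fun p => det (A.submatrix id p) * ∏ i, B (p i) i)]
  rw [← Fintype.sum_bijective _ toInj_bijective _ _ (fun x => rfl)]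
  rw [Fintype.sum_prod_type]
  refine Finset.sum_congr rfl fun g _ => ?_
  have hAg : ∀ σ : Equiv.Perm (Fin m), A.submatrix id (g.1 ∘ σ)
      = (A.submatrix id g.1).submatrix id σ := fun σ => rfl
  calc ∑ σ : Equiv.Perm (Fin m),
        det (A.submatrix id (g.1 ∘ ⇑σ)) * ∏ i, B ((g.1 ∘ ⇑σ) i) i
      = det (A.submatrix id g.1) * ∑ σ : Equiv.Perm (Fin m),
          ((Equiv.Perm.sign σ : ℤ) : ℂ) * ∏ i, B (g.1 (σ i)) i := by
        rw [Finset.mul_sum]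
        refine Finset.sum_congr rfl fun σ _ => ?_
        rw [hAg σ, det_permute']
        push_cast
        ring_nf
        rfl
    _ = det (A.submatrix id g.1) * det (B.submatrix g.1 id) := by
        rw [det_apply' (B.submatrix g.1 id)]
        rfl

/-- Gram determinant as a sum of `normSq` of maximal minors. -/
theorem det_gram (X : Matrix (Fin k) (Fin m) ℂ) :
    det (Xᴴ * X) = ((∑ g : {g : Fin m → Fin k // StrictMono g},
      Complex.normSq (det (X.submatrix g.1 id)) : ℝ) : ℂ) := by
  rw [cauchyBinet]
  push_cast
  refine Finset.sum_congr rfl fun g _ => ?_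
  have h1 : Xᴴ.submatrix id g.1 = (X.submatrix g.1 id)ᴴ := rfl
  rw [h1, det_conjTranspose, Complex.star_def, ← Complex.normSq_eq_conj_mul_self]

theorem strictMono_val_le {g : Fin m → Fin k} (hg : StrictMono g) (i : Fin m) :
    (i : ℕ) ≤ (g i : ℕ) := by
  have : ∀ n : ℕ, ∀ i : Fin m, (i : ℕ) = n → n ≤ (g i : ℕ) := by
    intro n
    induction n with
    | zero => intro i _; exact Nat.zero_le _
    | succ n ih =>
      intro i hi
      have hn : n < m := by omega
      have hlt : (⟨n, hn⟩ : Fin m) < i := by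
        rw [Fin.lt_def]
        simp only [Fin.val_mk]
        omega
      have := hg hlt
      have h2 := ih ⟨n, hn⟩ rfl
      rw [Fin.lt_def] at this
      omega
  exact this i.val i rfl

/-- AM-GM for positive semidefinite matrices: `det ≤ (tr/n)^n`, and `0 ≤ tr`. -/
theorem psd_det_le_trace_pow {n : ℕ} (hn : 0 < n) (X : Matrix (Fin n) (Fin n) ℂ)
    (hX : X.PosSemidef) :
    X.det.re ≤ (X.trace.re / n) ^ n ∧ 0 ≤ X.trace.re := by
  have hH := hX.1
  set ev := hH.eigenvalues with hev_def
  have hev : ∀ i, 0 ≤ ev i := hX.eigenvalues_nonneg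
  have hdet : X.det.re = ∏ i, ev i := by
    rw [hH.det_eq_prod_eigenvalues]
    norm_cast
  have htr : X.trace.re = ∑ i, ev i := by
    conv_lhs => rw [hH.spectral_theorem, Unitary.conjStarAlgAut_apply]
    rw [Matrix.trace_mul_cycle]
    have hu : (star ((hH.eigenvectorUnitary : Matrix (Fin n) (Fin n) ℂ)) *
        (hH.eigenvectorUnitary : Matrix (Fin n) (Fin n) ℂ)) = 1 := by
      exact Unitary.coe_star_mul_self hH.eigenvectorUnitary
    rw [hu, Matrix.one_mul, Matrix.trace_diagonal]
    simp [Complex.re_sum, hev_def]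
  refine ⟨?_, by rw [htr]; exact Finset.sum_nonneg fun i _ => hev i⟩
  rw [hdet, htr]
  have key := Real.geom_mean_le_arith_mean_weighted Finset.univ
    (fun _ => (n : ℝ)⁻¹) ev (fun i _ => by positivity)
    (by rw [Finset.sum_const, Finset.card_univ, Fintype.card_fin, nsmul_eq_mul]
        field_simp) (fun i _ => hev i)
  have hprod : (∏ i, ev i ^ ((n : ℝ)⁻¹)) ^ (n : ℕ) = ∏ i, ev i := by
    rw [← Finset.prod_pow]
    refine Finset.prod_congr rfl fun i _ => ?_
    rw [← Real.rpow_natCast (ev i ^ ((n : ℝ)⁻¹)) n, ← Real.rpow_mul (hev i)]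
    rw [inv_mul_cancel₀ (by positivity : (n : ℝ) ≠ 0), Real.rpow_one]
  calc ∏ i, ev i = (∏ i, ev i ^ ((n : ℝ)⁻¹)) ^ (n : ℕ) := hprod.symm
    _ ≤ (∑ i, (n : ℝ)⁻¹ * ev i) ^ (n : ℕ) := by
        apply pow_le_pow_left₀ (Finset.prod_nonneg fun i _ => Real.rpow_nonneg (hev i) _) key
    _ = ((∑ i, ev i) / n) ^ (n : ℕ) := by
        rw [← Finset.mul_sum]
        congr 1
        field_simp
theorem endgame (M : ℕ) (hM : 0 < M) {p0 L g c f t : ℝ} (hp0 : 0 < p0) (hL : 0 ≤ L)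
    (hg : 0 ≤ g) (hc : 0 ≤ c) (hf : 0 ≤ f) (ht : 0 ≤ t)
    (h1 : 1 ≤ g * c) (h2 : c ≤ L * f) (h3 : f ≤ (p0 / M) ^ M) (h4 : g ≤ (t / M) ^ M) :
    t / M ≥ (M / p0) * L ^ (-(1:ℝ)/M) := by
  have hMr : (0:ℝ) < M := by exact_mod_cast hM
  have hc0 : 0 < c := by
    rcases hc.lt_or_eq with h | h
    · exact h
    · exfalso; rw [← h, mul_zero] at h1; linarith
  have hg0 : 0 < g := by
    by_contra hcon
    push_neg at hcon
    nlinarith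
  have hLf : 0 < L * f := lt_of_lt_of_le hc0 h2
  have hL0 : 0 < L := by
    rcases hL.lt_or_eq with h | h
    · exact h
    · exfalso; rw [← h, zero_mul] at hLf; linarith
  have hf0 : 0 < f := by nlinarith
  have hchain : 1 ≤ (t/M)^M * (L * (p0/M)^M) := by
    calc (1:ℝ) ≤ g * c := h1
      _ ≤ g * (L * f) := mul_le_mul_of_nonneg_left h2 hg
      _ ≤ (t/M)^M * (L * f) := mul_le_mul_of_nonneg_right h4 hLf.le
      _ ≤ (t/M)^M * (L * (p0/M)^M) := by
          have hh : L * f ≤ L * (p0/M)^M := mul_le_mul_of_nonneg_left h3 hL0.le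
          exact mul_le_mul_of_nonneg_left hh (pow_nonneg (div_nonneg ht hMr.le) M)
  have hcanc : (L * (p0/M)^M) * ((M/p0)^M * L⁻¹) = 1 := by
    have h5 : (p0/M) * ((M:ℝ)/p0) = 1 := by field_simp
    calc (L * (p0/M)^M) * ((M/p0)^M * L⁻¹)
        = (L * L⁻¹) * ((p0/M)^M * ((M:ℝ)/p0)^M) := by ring
      _ = 1 * ((p0/M * ((M:ℝ)/p0))^M) := by rw [mul_inv_cancel₀ hL0.ne', ← mul_pow]
      _ = 1 := by rw [h5, one_pow, one_mul]
  have key : ((M:ℝ)/p0)^M * L⁻¹ ≤ (t/M)^M := by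
    calc ((M:ℝ)/p0)^M * L⁻¹ = 1 * (((M:ℝ)/p0)^M * L⁻¹) := (one_mul _).symm
      _ ≤ ((t/M)^M * (L * (p0/M)^M)) * (((M:ℝ)/p0)^M * L⁻¹) := by
          apply mul_le_mul_of_nonneg_right hchain
          positivity
      _ = (t/M)^M * ((L * (p0/M)^M) * (((M:ℝ)/p0)^M * L⁻¹)) := by ring
      _ = (t/M)^M := by rw [hcanc, mul_one]
  have hRHS : ((M:ℝ)/p0 * L ^ (-(1:ℝ)/(M:ℝ)))^(M:ℕ) = ((M:ℝ)/p0)^M * L⁻¹ := by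
    rw [mul_pow]
    congr 1
    rw [← Real.rpow_natCast (L ^ (-(1:ℝ)/(M:ℝ))) M, ← Real.rpow_mul hL]
    rw [show (-(1:ℝ)/(M:ℝ)) * (M:ℕ) = -1 by field_simp]
    exact Real.rpow_neg_one L
  rw [ge_iff_le]
  by_contra hcon
  push_neg at hcon
  have hlt := pow_lt_pow_left₀ hcon (div_nonneg ht hMr.le) hM.ne'
  rw [hRHS] at hlt
  exact absurd key (not_le.mpr hlt)

end ZFCB
open ZFCB

/-- Fundamental lower bound on the arithmetic MSE of any zero-forcing block
decision feedback transceiver: `tr(W R_vv Wᴴ)/M ≥ (M/p0) (∏_{i=1}^M λ_i)^(-1/M)`,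
where the `λ_i` are the ordered eigenvalues of `Hᴴ R_vv⁻¹ H`. -/
theorem stmt9 (P K M : ℕ) (hM : 0 < M) (hMP : M ≤ P) (hMK : M ≤ K)
    (H : Matrix (Fin P) (Fin K) ℂ)
    (Rvv : Matrix (Fin P) (Fin P) ℂ) (hRvv : Rvv.PosDef)
    (hrank : M ≤ H.rank)
    (p0 : ℝ) (hp0 : 0 < p0)
    (V : Matrix (Fin K) (Fin K) ℂ) (hV : Vᴴ * V = 1)
    (lam : Fin K → ℝ) (hmono : ∀ i j : Fin K, i ≤ j → lam j ≤ lam i)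
    (hnn : ∀ i, 0 ≤ lam i)
    (hA : Hᴴ * Rvv⁻¹ * H = V * Matrix.diagonal (fun i => (lam i : ℂ)) * Vᴴ)
    (F : Matrix (Fin K) (Fin M) ℂ) (W : Matrix (Fin M) (Fin P) ℂ)
    (B : Matrix (Fin M) (Fin M) ℂ) (hB : ∀ i j : Fin M, j ≤ i → B i j = 0)
    (hpow : (F * Fᴴ).trace.re ≤ p0)
    (hZF : W * H * F = B + 1) :
    (W * Rvv * Wᴴ).trace.re / M ≥
      (M / p0) * (∏ i : Fin M, lam (Fin.castLE hMK i)) ^ (-(1:ℝ)/M) := by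
  classical
  have hRunit : IsUnit Rvv.det := hRvv.det_pos.ne'.isUnit
  have hRi : (Rvv⁻¹).PosDef := hRvv.inv
  set S := CFC.sqrt (Rvv⁻¹) with hS_def
  have hSS : S * S = Rvv⁻¹ := CFC.sqrt_mul_sqrt_self _ hRi.posSemidef.nonneg
  have hSH : Sᴴ = S := (CFC.sqrt_nonneg (Rvv⁻¹)).posSemidef.1
  have hSdet : IsUnit S.det := by
    have h1 : S.det * S.det = (Rvv⁻¹).det := by rw [← det_mul, hSS]
    have h2 : (Rvv⁻¹).det ≠ 0 := hRi.det_pos.ne'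
    have h3 : S.det ≠ 0 := fun h => h2 (by rw [← h1, h, mul_zero])
    exact h3.isUnit
  have hSinv : S⁻¹ * S = 1 := Matrix.nonsing_inv_mul S hSdet
  set G := W * S⁻¹ with hG_def
  set C := S * (H * F) with hC_def
  set E := Vᴴ * F with hE_def
  set D := Matrix.diagonal (fun i : Fin K => (lam i : ℂ)) with hD_def
  -- key matrix identities
  have hGC : G * C = B + 1 := by
    rw [hG_def, hC_def, Matrix.mul_assoc, ← Matrix.mul_assoc S⁻¹ S (H * F), hSinv,
      Matrix.one_mul, ← Matrix.mul_assoc, hZF]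
  have hWRW : G * Gᴴ = W * Rvv * Wᴴ := by
    rw [hG_def, conjTranspose_mul, Matrix.conjTranspose_nonsing_inv, hSH,
      Matrix.mul_assoc, ← Matrix.mul_assoc S⁻¹ S⁻¹ Wᴴ, ← Matrix.mul_inv_rev, hSS,
      Matrix.nonsing_inv_nonsing_inv Rvv hRunit, ← Matrix.mul_assoc]
  have hCC : Cᴴ * C = Eᴴ * (D * E) := by
    rw [hC_def, conjTranspose_mul, hSH]
    calc (H * F)ᴴ * S * (S * (H * F))
        = (H * F)ᴴ * ((S * S) * (H * F)) := by
          rw [Matrix.mul_assoc, ← Matrix.mul_assoc S S (H * F)]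
      _ = Fᴴ * ((Hᴴ * Rvv⁻¹ * H) * F) := by
          rw [hSS, conjTranspose_mul]
          simp only [Matrix.mul_assoc]
      _ = Eᴴ * (D * E) := by
          rw [hA, hE_def, conjTranspose_mul, conjTranspose_conjTranspose]
          simp only [Matrix.mul_assoc]
  have hEE : Eᴴ * E = Fᴴ * F := by
    have hVV : V * Vᴴ = 1 := mul_eq_one_comm.mp hV
    rw [hE_def, conjTranspose_mul, conjTranspose_conjTranspose, Matrix.mul_assoc,
      ← Matrix.mul_assoc V Vᴴ F, hVV, Matrix.one_mul]
  -- determinant of G * C is 1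
  have hdetGC : det (G * C) = 1 := by
    rw [hGC]
    rw [Matrix.det_of_upperTriangular (by
      intro i j hij
      have hne : i ≠ j := by simpa using (ne_of_gt hij)
      rw [Matrix.add_apply, hB i j (le_of_lt hij), Matrix.one_apply_ne hne, add_zero])]
    have : ∀ i : Fin M, (B + 1) i i = 1 := fun i => by
      simp [Matrix.add_apply, hB i i le_rfl]
    simp [this]
  -- Gram representations
  have hgramG : det (G * Gᴴ) = ((∑ g : {g : Fin M → Fin P // StrictMono g},
      Complex.normSq (det ((Gᴴ).submatrix g.1 id)) : ℝ) : ℂ) := by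
    have h := det_gram (X := Gᴴ)
    rwa [conjTranspose_conjTranspose] at h
  -- Cauchy-Schwarz
  have hterm : ∀ g : {g : Fin M → Fin P // StrictMono g},
      det (G.submatrix id g.1) = star (det ((Gᴴ).submatrix g.1 id)) := by
    intro g
    have h1 : (Gᴴ).submatrix g.1 id = (G.submatrix id g.1)ᴴ := rfl
    rw [h1, det_conjTranspose, star_star]
  have hCS : (1:ℝ) ≤ (det (G * Gᴴ)).re * (det (Cᴴ * C)).re := by
    have habs : (1:ℝ) ≤ ∑ g : {g : Fin M → Fin P // StrictMono g},
        ‖det ((Gᴴ).submatrix g.1 id)‖ * ‖det (C.submatrix g.1 id)‖ := by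
      calc (1:ℝ) = ‖det (G * C)‖ := by rw [hdetGC]; simp
        _ = ‖∑ g : {g : Fin M → Fin P // StrictMono g},
              det (G.submatrix id g.1) * det (C.submatrix g.1 id)‖ := by rw [← cauchyBinet]
        _ ≤ ∑ g : {g : Fin M → Fin P // StrictMono g},
              ‖det (G.submatrix id g.1) * det (C.submatrix g.1 id)‖ :=
            norm_sum_le _ _
        _ = _ := by
            refine Finset.sum_congr rfl fun g _ => ?_
            rw [norm_mul, hterm g]
            congr 1
            rw [Complex.star_def, Complex.norm_conj]
    have hsq := Finset.sum_mul_sq_le_sq_mul_sq Finset.univ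
      (fun g : {g : Fin M → Fin P // StrictMono g} => ‖det ((Gᴴ).submatrix g.1 id)‖)
      (fun g => ‖det (C.submatrix g.1 id)‖)
    have h1le : (1:ℝ) ≤ (∑ g : {g : Fin M → Fin P // StrictMono g},
        ‖det ((Gᴴ).submatrix g.1 id)‖ * ‖det (C.submatrix g.1 id)‖) ^ 2 := by
      nlinarith [habs]
    rw [hgramG, det_gram C, Complex.ofReal_re, Complex.ofReal_re]
    refine le_trans h1le (le_trans hsq (le_of_eq ?_))
    simp only [Complex.sq_norm]
  -- representation of det (Cᴴ C)
  have hc_repr : (det (Cᴴ * C)).re = ∑ g : {g : Fin M → Fin K // StrictMono g},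
      (∏ i, lam (g.1 i)) * Complex.normSq (det (E.submatrix g.1 id)) := by
    have hterm2 : ∀ g : {g : Fin M → Fin K // StrictMono g},
        det ((Eᴴ).submatrix id g.1) * det ((D * E).submatrix g.1 id)
          = (((∏ i, lam (g.1 i)) * Complex.normSq (det (E.submatrix g.1 id)) : ℝ) : ℂ) := by
      intro g
      have h1 : (Eᴴ).submatrix id g.1 = (E.submatrix g.1 id)ᴴ := rfl
      have h2 : (D * E).submatrix g.1 id
          = Matrix.diagonal (fun i => (lam (g.1 i) : ℂ)) * E.submatrix g.1 id := by
        ext i j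
        rw [Matrix.submatrix_apply, hD_def, Matrix.diagonal_mul, Matrix.diagonal_mul,
          Matrix.submatrix_apply]
      rw [h1, h2, det_conjTranspose, det_mul, det_diagonal]
      push_cast
      rw [Complex.star_def, Complex.normSq_eq_conj_mul_self]
      ring
    rw [hCC, cauchyBinet, Finset.sum_congr rfl (fun g _ => hterm2 g)]
    rw [← Complex.ofReal_sum]
    exact Complex.ofReal_re _
  have hfdet : (det (Fᴴ * F)).re = ∑ g : {g : Fin M → Fin K // StrictMono g},
      Complex.normSq (det (E.submatrix g.1 id)) := by
    rw [← hEE, det_gram E, Complex.ofReal_re]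
  have hc_le : (det (Cᴴ * C)).re
      ≤ (∏ i : Fin M, lam (Fin.castLE hMK i)) * (det (Fᴴ * F)).re := by
    rw [hc_repr, hfdet, Finset.mul_sum]
    apply Finset.sum_le_sum
    intro g _
    apply mul_le_mul_of_nonneg_right _ (Complex.normSq_nonneg _)
    apply Finset.prod_le_prod (fun i _ => hnn _)
    intro i _
    apply hmono
    rw [Fin.le_def]
    simpa using strictMono_val_le g.2 i
  -- nonnegativity
  have hg_nonneg : 0 ≤ (det (G * Gᴴ)).re := by
    rw [hgramG, Complex.ofReal_re]
    exact Finset.sum_nonneg fun g _ => Complex.normSq_nonneg _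
  have hc_nonneg : 0 ≤ (det (Cᴴ * C)).re := by
    rw [hc_repr]
    exact Finset.sum_nonneg fun g _ =>
      mul_nonneg (Finset.prod_nonneg fun i _ => hnn _) (Complex.normSq_nonneg _)
  have hf_nonneg : 0 ≤ (det (Fᴴ * F)).re := by
    rw [hfdet]
    exact Finset.sum_nonneg fun g _ => Complex.normSq_nonneg _
  have hL_nonneg : 0 ≤ ∏ i : Fin M, lam (Fin.castLE hMK i) :=
    Finset.prod_nonneg fun i _ => hnn _
  -- AM-GM bounds
  have hMr : (0:ℝ) < M := by exact_mod_cast hM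
  obtain ⟨hg_le, ht_nonneg⟩ := psd_det_le_trace_pow hM _ (posSemidef_self_mul_conjTranspose G)
  have htrW : (G * Gᴴ).trace = (W * Rvv * Wᴴ).trace := by rw [hWRW]
  rw [htrW] at hg_le ht_nonneg
  obtain ⟨hf_le, hft_nonneg⟩ := psd_det_le_trace_pow hM _ (posSemidef_conjTranspose_mul_self F)
  have htrF : (Fᴴ * F).trace = (F * Fᴴ).trace := Matrix.trace_mul_comm Fᴴ F
  rw [htrF] at hf_le hft_nonneg
  have hf3 : (det (Fᴴ * F)).re ≤ (p0 / M) ^ M :=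
    le_trans hf_le (pow_le_pow_left₀ (div_nonneg hft_nonneg hMr.le)
      ((div_le_div_iff_of_pos_right hMr).mpr hpow) M)
  exact endgame M hM hp0 hL_nonneg hg_nonneg hc_nonneg hf_nonneg ht_nonneg hCS hc_le hf3 hg_le
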